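/- Let G be a second countable, locally compact, Hausdorff topological groupoid. Then the following are equivalent: (a) the source map s : G → G is a local homeomorphism; (b) the range map r : G → G is a local homeomorphism; (c) G is r-discrete and the composition map G^{(2)} → G (with G^{(2)} carrying the subspace topology from G × G) is a local homeomorphism. -/

import Mathlib

/-- A groupoid in the sense of Renault: a set `G` together with a set of composable
pairs (encoded by the predicate `Comp`), a (partially meaningful) composition `mul`
and an involution `inv`.  The field `comp_iff` records the standard characterisation
of composability: `(a, b)` is composable iff `s(a) = r(b)`, where `s(a) = a⁻¹a` and
`r(a) = aa⁻¹`. -/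
structure GroupoidStr (G : Type*) where
  mul : G → G → G
  inv : G → G
  Comp : G → G → Prop
  comp_mul_left : ∀ {a b c}, Comp a b → Comp b c → Comp (mul a b) c
  comp_mul_right : ∀ {a b c}, Comp a b → Comp b c → Comp a (mul b c)
  mul_assoc : ∀ {a b c}, Comp a b → Comp b c → mul (mul a b) c = mul a (mul b c)
  comp_inv : ∀ a, Comp (inv a) a
  inv_mul_cancel : ∀ {a b}, Comp a b → mul (inv a) (mul a b) = b
  mul_inv_cancel : ∀ {a b}, Comp a b → mul (mul a b) (inv b) = a
  inv_inv : ∀ a, inv (inv a) = a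
  comp_iff : ∀ a b, Comp a b ↔ mul (inv a) a = mul b (inv b)

namespace GroupoidStr

variable {G : Type*}

/-- The source map `s(a) = a⁻¹ a`. -/
def src (S : GroupoidStr G) (a : G) : G := S.mul (S.inv a) a

/-- The range map `r(a) = a a⁻¹`. -/
def rng (S : GroupoidStr G) (a : G) : G := S.mul a (S.inv a)

/-- The unit space `G⁽⁰⁾`, the common image of the range and source maps. -/
def unitSpace (S : GroupoidStr G) : Set G := Set.range S.rng

end GroupoidStr

namespace GroupoidStr

variable {G : Type*}

variable (S : GroupoidStr G)

lemma rng_inv (a : G) : S.rng (S.inv a) = S.src a := by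
  simp [rng, src, S.inv_inv]

lemma src_inv (a : G) : S.src (S.inv a) = S.rng a := by
  simp [rng, src, S.inv_inv]

lemma comp_iff' (a b : G) : S.Comp a b ↔ S.src a = S.rng b := S.comp_iff a b

lemma comp_inv_self (a : G) : S.Comp a (S.inv a) := by
  rw [comp_iff', rng_inv]

lemma mul_src (a : G) : S.mul a (S.src a) = a := by
  have := S.inv_mul_cancel (S.comp_inv a)
  rwa [S.inv_inv] at this

lemma rng_mul' (a : G) : S.mul (S.rng a) a = a := by
  have := S.mul_inv_cancel (S.comp_inv (S.inv a))
  rwa [S.inv_inv] at this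

lemma comp_inv_rev {a b : G} (h : S.Comp a b) : S.Comp (S.inv b) (S.inv a) := by
  rw [comp_iff', src_inv, rng_inv]
  exact ((S.comp_iff' a b).mp h).symm

lemma inv_mul {a b : G} (h : S.Comp a b) : S.inv (S.mul a b) = S.mul (S.inv b) (S.inv a) := by
  have h1 : S.Comp (S.mul a b) (S.inv b) := S.comp_mul_left h (S.comp_inv_self b)
  have hstar : S.mul (S.inv (S.mul a b)) a = S.inv b := by
    have := S.inv_mul_cancel h1
    rwa [S.mul_inv_cancel h] at this
  have h2 : S.Comp (S.inv (S.mul a b)) a := by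
    have := S.comp_mul_right (S.comp_inv (S.mul a b)) h1
    rwa [S.mul_inv_cancel h] at this
  have := S.mul_inv_cancel h2
  rw [hstar] at this
  exact this.symm

lemma rng_mul {a b : G} (h : S.Comp a b) : S.rng (S.mul a b) = S.rng a := by
  have h1 : S.Comp (S.mul a b) (S.inv b) := S.comp_mul_left h (S.comp_inv_self b)
  have h2 : S.Comp (S.inv b) (S.inv a) := S.comp_inv_rev h
  rw [rng, S.inv_mul h, ← S.mul_assoc h1 h2, S.mul_inv_cancel h, rng]

lemma src_mul {a b : G} (h : S.Comp a b) : S.src (S.mul a b) = S.src b := by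
  rw [← S.rng_inv, S.inv_mul h, S.rng_mul (S.comp_inv_rev h), S.rng_inv]

lemma src_unit {u : G} (hu : u ∈ S.unitSpace) : S.src u = u := by
  obtain ⟨x, rfl⟩ := hu
  rw [rng, S.src_mul (S.comp_inv_self x), src_inv, rng]

lemma rng_unit {u : G} (hu : u ∈ S.unitSpace) : S.rng u = u := by
  obtain ⟨x, rfl⟩ := hu
  exact S.rng_mul (S.comp_inv_self x)

lemma src_mem_unitSpace (a : G) : S.src a ∈ S.unitSpace := ⟨S.inv a, S.rng_inv a⟩

lemma eq_inv_of_mul_unit {b c : G} (h : S.Comp b c) (hu : S.mul b c ∈ S.unitSpace) :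
    c = S.inv b := by
  have h1 : S.mul b c = S.rng b := by
    rw [← S.rng_mul h]; exact (S.rng_unit hu).symm
  have := S.inv_mul_cancel h
  rw [h1, ← S.src_inv, S.mul_src] at this
  exact this.symm

lemma comp_inv_left_iff {x z : G} : S.Comp (S.inv x) z ↔ S.rng x = S.rng z := by
  rw [comp_iff', src_inv]

lemma mul_inv_mul {x z : G} (h : S.rng x = S.rng z) :
    S.mul x (S.mul (S.inv x) z) = z := by
  have h1 : S.Comp (S.inv x) z := S.comp_inv_left_iff.mpr h
  rw [← S.mul_assoc (S.comp_inv_self x) h1]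
  show S.mul (S.rng x) z = z
  rw [h, S.rng_mul']

lemma comp_inv_mul {x z : G} (h : S.rng x = S.rng z) :
    S.Comp x (S.mul (S.inv x) z) :=
  S.comp_mul_right (S.comp_inv_self x) (S.comp_inv_left_iff.mpr h)

end GroupoidStr


/-- For a second countable, locally compact, Hausdorff topological groupoid `G`,
the following are equivalent: (a) the source map is a local homeomorphism;
(b) the range map is a local homeomorphism; (c) `G` is `r`-discrete (the unit space is
open) and the composition map `G⁽²⁾ → G` is a local homeomorphism. -/
theorem stmt3 {G : Type*} [TopologicalSpace G] [SecondCountableTopology G]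
    [LocallyCompactSpace G] [T2Space G] (S : GroupoidStr G)
    (contMul : Continuous fun p : {q : G × G // S.Comp q.1 q.2} => S.mul p.1.1 p.1.2)
    (contInv : Continuous S.inv) :
    List.TFAE [IsLocalHomeomorph S.src,
      IsLocalHomeomorph S.rng,
      IsOpen S.unitSpace ∧
        IsLocalHomeomorph (fun p : {q : G × G // S.Comp q.1 q.2} => S.mul p.1.1 p.1.2)] := by
  classical
  have hinvlh : IsLocalHomeomorph S.inv :=
    (Homeomorph.mk ⟨S.inv, S.inv, S.inv_inv, S.inv_inv⟩ contInv contInv).isLocalHomeomorph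
  tfae_have 1 → 2 := by
    intro h
    have hre : S.rng = S.src ∘ S.inv := funext fun a => (S.src_inv a).symm
    rw [hre]
    exact h.comp hinvlh
  tfae_have 2 → 1 := by
    intro h
    have hre : S.src = S.rng ∘ S.inv := funext fun a => (S.rng_inv a).symm
    rw [hre]
    exact h.comp hinvlh
  tfae_have 2 → 3 := by
    intro hr
    have hrc : Continuous S.rng := hr.continuous
    constructor
    · -- unit space is open
      rw [isOpen_iff_mem_nhds]
      intro u hu
      obtain ⟨e, hue, hfe⟩ := hr u
      have hOopen : IsOpen (e.source ∩ S.rng ⁻¹' e.source) :=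
        e.open_source.inter (e.open_source.preimage hrc)
      have hsub : e.source ∩ S.rng ⁻¹' e.source ⊆ S.unitSpace := by
        rintro x ⟨hx1, hx2⟩
        have key : e x = e (S.rng x) := by
          rw [← hfe]
          exact (S.rng_unit ⟨x, rfl⟩).symm
        exact ⟨x, (e.injOn hx1 hx2 key).symm⟩
      exact Filter.mem_of_superset
        (hOopen.mem_nhds ⟨hue, by
          show S.rng u ∈ e.source
          rw [S.rng_unit hu]; exact hue⟩) hsub
    · -- composition is a local homeomorphism
      intro p
      obtain ⟨e, hae, hfe⟩ := hr p.1.1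
      have key : ∀ {z : G}, S.rng z ∈ e.target → S.rng (e.symm (S.rng z)) = S.rng z := by
        intro z hz
        exact (congrFun hfe _).trans (e.right_inv hz)
      refine ⟨{
        toFun := fun q : {q : G × G // S.Comp q.1 q.2} => S.mul q.1.1 q.1.2
        invFun := fun z => if hz : S.rng z ∈ e.target then
            ⟨(e.symm (S.rng z), S.mul (S.inv (e.symm (S.rng z))) z), S.comp_inv_mul (key hz)⟩
          else p
        source := {q | q.1.1 ∈ e.source}
        target := {z | S.rng z ∈ e.target}
        map_source' := fun q hq => by
          show S.rng (S.mul q.1.1 q.1.2) ∈ e.target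
          rw [S.rng_mul q.2, hfe]
          exact e.map_source hq
        map_target' := fun z hz => by
          show _ ∈ {q : {q : G × G // S.Comp q.1 q.2} | q.1.1 ∈ e.source}
          beta_reduce
          rw [dif_pos (show S.rng z ∈ e.target from hz)]
          exact e.map_target hz
        left_inv' := fun q hq => by
          have h1 : S.rng (S.mul q.1.1 q.1.2) ∈ e.target := by
            rw [S.rng_mul q.2, hfe]; exact e.map_source hq
          beta_reduce
          rw [dif_pos h1]
          have h2 : e.symm (S.rng (S.mul q.1.1 q.1.2)) = q.1.1 := by
            rw [S.rng_mul q.2, hfe]; exact e.left_inv hq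
          apply Subtype.ext
          apply Prod.ext
          · exact h2
          · show S.mul (S.inv (e.symm (S.rng (S.mul (q : G × G).1 (q : G × G).2))))
                (S.mul (q : G × G).1 (q : G × G).2) = (q : G × G).2
            rw [h2]
            exact S.inv_mul_cancel q.2
        right_inv' := fun z hz => by
          beta_reduce
          rw [dif_pos (show S.rng z ∈ e.target from hz)]
          exact S.mul_inv_mul (key hz)
        open_source := e.open_source.preimage (continuous_fst.comp continuous_subtype_val)
        open_target := e.open_target.preimage hrc
        continuousOn_toFun := contMul.continuousOn
        continuousOn_invFun := by
          rw [continuousOn_iff_continuous_restrict]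
          have heq : {z | S.rng z ∈ e.target}.domRestrict (fun z => if hz : S.rng z ∈ e.target then
              (⟨(e.symm (S.rng z), S.mul (S.inv (e.symm (S.rng z))) z),
                S.comp_inv_mul (key hz)⟩ : {q : G × G // S.Comp q.1 q.2})
            else p) = fun z : {z | S.rng z ∈ e.target} =>
              (⟨(e.symm (S.rng z.1), S.mul (S.inv (e.symm (S.rng z.1))) z.1),
                S.comp_inv_mul (key z.2)⟩ : {q : G × G // S.Comp q.1 q.2}) :=
            funext fun z => dif_pos z.2
          rw [heq]
          have c1 : Continuous fun z : {z | S.rng z ∈ e.target} => e.symm (S.rng z.1) :=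
            e.continuousOn_symm.comp_continuous (hrc.comp continuous_subtype_val) fun z => z.2
          have c2 : Continuous fun z : {z | S.rng z ∈ e.target} =>
              S.mul (S.inv (e.symm (S.rng z.1))) z.1 := by
            have : Continuous fun z : {z | S.rng z ∈ e.target} =>
                (⟨(S.inv (e.symm (S.rng z.1)), z.1),
                  (S.comp_inv_left_iff).mpr (key z.2)⟩ : {q : G × G // S.Comp q.1 q.2}) :=
              Continuous.subtype_mk ((contInv.comp c1).prodMk continuous_subtype_val) _
            exact contMul.comp this
          exact Continuous.subtype_mk (c1.prodMk c2) _ }, hae, rfl⟩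
  tfae_have 3 → 1 := by
    rintro ⟨hU, hm⟩
    set j : G → {q : G × G // S.Comp q.1 q.2} := fun a => ⟨(S.inv a, a), S.comp_inv a⟩ with hj
    have hjc : Continuous j := Continuous.subtype_mk (contInv.prodMk continuous_id) _
    have hemb : Topology.IsEmbedding j :=
      Function.LeftInverse.isEmbedding (f := fun q : {q : G × G // S.Comp q.1 q.2} => q.1.2)
        (fun a => rfl) (continuous_snd.comp continuous_subtype_val) hjc
    have hrange : Set.range j =
        (fun q : {q : G × G // S.Comp q.1 q.2} => S.mul q.1.1 q.1.2) ⁻¹' S.unitSpace := by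
      ext q
      constructor
      · rintro ⟨a, rfl⟩
        exact S.src_mem_unitSpace a
      · intro hq
        refine ⟨q.1.2, Subtype.ext (Prod.ext ?_ rfl)⟩
        show S.inv ((q : G × G).2) = (q : G × G).1
        rw [S.eq_inv_of_mul_unit q.2 hq, S.inv_inv]
    have hoe : Topology.IsOpenEmbedding j := ⟨hemb, by rw [hrange]; exact hU.preimage contMul⟩
    have hse : S.src = (fun q : {q : G × G // S.Comp q.1 q.2} => S.mul q.1.1 q.1.2) ∘ j := rfl
    rw [hse]
    exact hm.comp hoe.isLocalHomeomorph
  tfae_finish
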